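/- Let h : [0,∞) → ℝ be Lipschitz, and f_h the standard solution of the half-normal Stein equation. Then f_h is twice differentiable almost everywhere and sup_{x≥0} |f_h''(x)| ≤ 2‖h'‖_∞. -/

import Mathlib

open MeasureTheory ProbabilityTheory Real

/-- Standard normal density. -/
noncomputable def stdPhi (x : ℝ) : ℝ := Real.exp (-x^2/2) / Real.sqrt (2*Real.pi)

/-- `E[h(|Z|)]` for `Z` standard normal. -/
noncomputable def Ehn (h : ℝ → ℝ) : ℝ := ∫ z, h |z| ∂(gaussianReal 0 1)

/-- The standard solution of the half-normal Stein equation. -/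
noncomputable def fh (h : ℝ → ℝ) (x : ℝ) : ℝ :=
  (stdPhi x)⁻¹ * ∫ t in (0:ℝ)..x, (h t - Ehn h) * stdPhi t

open Set Filter Topology

namespace SteinAux

lemma stdPhi_pos (x : ℝ) : 0 < stdPhi x := by
  apply div_pos (exp_pos _)
  exact Real.sqrt_pos.2 (by positivity)

lemma continuous_stdPhi : Continuous stdPhi := by
  apply Continuous.div_const
  exact Real.continuous_exp.comp (by fun_prop)

lemma hasDerivAt_stdPhi (x : ℝ) : HasDerivAt stdPhi (-x * stdPhi x) x := by
  have h1 : HasDerivAt (fun y : ℝ => -y^2/2) (-x) x := by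
    have H := ((hasDerivAt_pow 2 x).neg).div_const 2
    have e : -(((2:ℕ):ℝ) * x ^ (2-1)) / 2 = -x := by push_cast; ring
    exact e ▸ H
  have := (h1.exp).div_const (Real.sqrt (2*Real.pi))
  refine this.congr_deriv ?_
  unfold stdPhi; ring

lemma stdPhi_eq (x : ℝ) : stdPhi x = x ^ (0:ℕ) * Real.exp (-(1/2) * x^2) * (Real.sqrt (2*Real.pi))⁻¹ := by
  unfold stdPhi; rw [div_eq_mul_inv]; ring_nf

lemma integrable_stdPhi : Integrable stdPhi := by
  have := (integrable_exp_neg_mul_sq (b := (1/2:ℝ)) (by norm_num)).mul_const (Real.sqrt (2*Real.pi))⁻¹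
  apply this.congr
  filter_upwards with x
  rw [stdPhi_eq]; ring

lemma integrable_mul_stdPhi : Integrable (fun s : ℝ => s * stdPhi s) := by
  have := (integrable_mul_exp_neg_mul_sq (b := (1/2:ℝ)) (by norm_num)).mul_const (Real.sqrt (2*Real.pi))⁻¹
  apply this.congr
  filter_upwards with x
  rw [stdPhi_eq]; ring

lemma integrable_sq_mul_stdPhi : Integrable (fun s : ℝ => s^2 * stdPhi s) := by
  have h := (integrable_rpow_mul_exp_neg_mul_sq (b := (1/2:ℝ)) (by norm_num) (s := 2) (by norm_num)).mul_const (Real.sqrt (2*Real.pi))⁻¹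
  apply h.congr
  filter_upwards with x
  rw [stdPhi_eq]
  rw [show ((2:ℝ)) = ((2:ℕ):ℝ) by norm_num, Real.rpow_natCast]
  ring

lemma stdPhi_le_exp_neg {s : ℝ} (hs : 2 ≤ s) : stdPhi s ≤ Real.exp (-s) := by
  have h2 : (1:ℝ) ≤ Real.sqrt (2*Real.pi) := by
    rw [show (1:ℝ) = Real.sqrt 1 by simp]
    apply Real.sqrt_le_sqrt; nlinarith [Real.pi_gt_three]
  have h1 : Real.exp (-s^2/2) ≤ Real.exp (-s) := by
    apply Real.exp_le_exp.2; nlinarith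
  calc stdPhi s ≤ Real.exp (-s^2/2) := div_le_self (exp_pos _).le h2
    _ ≤ Real.exp (-s) := h1

lemma tendsto_stdPhi_atTop : Tendsto stdPhi atTop (𝓝 0) := by
  apply squeeze_zero' (g := fun s => Real.exp (-s))
  · filter_upwards with s; exact (stdPhi_pos s).le
  · filter_upwards [eventually_ge_atTop (2:ℝ)] with s hs
    exact stdPhi_le_exp_neg hs
  · exact Real.tendsto_exp_neg_atTop_nhds_zero

lemma tendsto_mul_stdPhi_atTop : Tendsto (fun s : ℝ => s * stdPhi s) atTop (𝓝 0) := by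
  have key : Tendsto (fun s : ℝ => s * Real.exp (-s)) atTop (𝓝 0) := by
    simpa using Real.tendsto_pow_mul_exp_neg_atTop_nhds_zero 1
  apply squeeze_zero' (g := fun s => s * Real.exp (-s))
  · filter_upwards [eventually_ge_atTop (0:ℝ)] with s hs
    exact mul_nonneg hs (stdPhi_pos s).le
  · filter_upwards [eventually_ge_atTop (2:ℝ)] with s hs
    exact mul_le_mul_of_nonneg_left (stdPhi_le_exp_neg hs) (by linarith)
  · exact key

lemma integral_Ioi_stdPhi_zero : ∫ s in Ioi (0:ℝ), stdPhi s = 1/2 := by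
  have h := integral_gaussian_Ioi (1/2)
  have heq : ∀ s : ℝ, stdPhi s = Real.exp (-(1/2) * s^2) * (Real.sqrt (2*Real.pi))⁻¹ := by
    intro s; rw [stdPhi_eq]; ring
  rw [show (fun s => stdPhi s) = fun s => Real.exp (-(1/2) * s^2) * (Real.sqrt (2*Real.pi))⁻¹ from funext heq]
  rw [integral_mul_const, h]
  rw [show π / (1/2 : ℝ) = 2 * π by ring]
  have : Real.sqrt (2*π) ≠ 0 := ne_of_gt (Real.sqrt_pos.2 (by positivity))
  field_simp

lemma integral_Ioi_mul_stdPhi (x : ℝ) : ∫ s in Ioi x, s * stdPhi s = stdPhi x := by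
  have h := integral_Ioi_of_hasDerivAt_of_tendsto
    (f := fun s => -stdPhi s) (f' := fun s => s * stdPhi s) (a := x) (m := 0)
    (continuous_stdPhi.neg.continuousWithinAt)
    (fun s _ => by
      have H := (hasDerivAt_stdPhi s).neg
      exact H.congr_deriv (by ring))
    (integrable_mul_stdPhi.integrableOn)
    (by simpa using tendsto_stdPhi_atTop.neg)
  simpa using h

lemma integral_Ioi_sq_mul_stdPhi (x : ℝ) :
    ∫ s in Ioi x, s^2 * stdPhi s = x * stdPhi x + ∫ s in Ioi x, stdPhi s := by
  have hd : ∀ s : ℝ, HasDerivAt (fun y => -(y * stdPhi y)) (s^2 * stdPhi s - stdPhi s) s := by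
    intro s
    have H := ((hasDerivAt_id s).mul (hasDerivAt_stdPhi s)).neg
    apply H.congr_deriv
    simp only [id_eq, one_mul]
    ring
  have h := integral_Ioi_of_hasDerivAt_of_tendsto
    (f := fun s => -(s * stdPhi s)) (f' := fun s => s^2 * stdPhi s - stdPhi s) (a := x) (m := 0)
    ((continuous_id.mul continuous_stdPhi).neg.continuousWithinAt)
    (fun s _ => hd s)
    ((integrable_sq_mul_stdPhi.sub integrable_stdPhi).integrableOn)
    (by simpa using tendsto_mul_stdPhi_atTop.neg)
  rw [integral_sub integrable_sq_mul_stdPhi.integrableOn integrable_stdPhi.integrableOn] at h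
  simp only [zero_sub, neg_neg] at h
  linarith


lemma integrable_abs_mul_stdPhi : Integrable (fun s : ℝ => |s| * stdPhi s) := by
  apply integrable_mul_stdPhi.abs.congr
  filter_upwards with s
  rw [abs_mul, abs_of_pos (stdPhi_pos s)]

lemma lip_bound {L : NNReal} {g : ℝ → ℝ} (hg : LipschitzWith L g) (s : ℝ) :
    |g s| ≤ |g 0| + L * |s| := by
  have := hg.dist_le_mul s 0
  rw [Real.dist_eq, Real.dist_eq, sub_zero] at this
  calc |g s| = |g 0 + (g s - g 0)| := by ring_nf
    _ ≤ |g 0| + |g s - g 0| := abs_add_le _ _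
    _ ≤ |g 0| + L * |s| := by linarith

lemma integrable_lip_mul {L : NNReal} {g : ℝ → ℝ} (hg : LipschitzWith L g) :
    Integrable (fun s : ℝ => g s * stdPhi s) := by
  apply Integrable.mono' (g := fun s => |g 0| * stdPhi s + L * (|s| * stdPhi s))
  · exact (integrable_stdPhi.const_mul _).add (integrable_abs_mul_stdPhi.const_mul _)
  · exact (hg.continuous.mul continuous_stdPhi).aestronglyMeasurable
  · filter_upwards with s
    rw [Real.norm_eq_abs, abs_mul, abs_of_pos (stdPhi_pos s)]
    have h1 := lip_bound hg s
    have h2 := (stdPhi_pos s).le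
    nlinarith [abs_nonneg (g s), abs_nonneg s, abs_nonneg (g 0)]

lemma lipschitzWith_habs {L : NNReal} {h : ℝ → ℝ} (hh : LipschitzWith L h) :
    LipschitzWith L (fun z : ℝ => h |z|) := by
  have habs : LipschitzWith 1 (fun x : ℝ => |x|) := by
    have := lipschitzWith_one_norm (E := ℝ); exact this
  have := hh.comp habs; rw [mul_one] at this; exact this

lemma stdPhi_pdf (x : ℝ) : gaussianPDFReal 0 1 x = stdPhi x := by
  unfold gaussianPDFReal stdPhi
  simp only [NNReal.coe_one, mul_one, sub_zero]
  rw [mul_comm, ← div_eq_mul_inv]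

lemma stdPhi_neg (x : ℝ) : stdPhi (-x) = stdPhi x := by
  unfold stdPhi; rw [neg_sq]

lemma Ehn_eq {L : NNReal} {h : ℝ → ℝ} (hh : LipschitzWith L h) :
    Ehn h = 2 * ∫ s in Ioi (0:ℝ), h s * stdPhi s := by
  have hint : Integrable (fun z : ℝ => stdPhi z * h |z|) := by
    apply (integrable_lip_mul (lipschitzWith_habs hh)).congr
    filter_upwards with z; ring
  have step1 : Ehn h = ∫ z, stdPhi z * h |z| := by
    unfold Ehn
    rw [gaussianReal_of_var_ne_zero 0 one_ne_zero]
    have hpdf : gaussianPDF 0 1 = fun z => (((gaussianPDFReal 0 1 z).toNNReal : NNReal) : ENNReal) := by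
      funext z; rfl
    rw [hpdf, integral_withDensity_eq_integral_smul
      (measurable_gaussianPDFReal 0 1).real_toNNReal (fun z => h |z|)]
    congr 1; funext z
    rw [NNReal.smul_def, Real.coe_toNNReal _ (gaussianPDFReal_nonneg 0 1 z), smul_eq_mul,
      stdPhi_pdf]
  have hrefl := integral_comp_neg_Ioi (0:ℝ) (fun z => stdPhi z * h |z|)
  rw [neg_zero] at hrefl
  have hIic : ∫ z in Iic (0:ℝ), stdPhi z * h |z| = ∫ z in Ioi (0:ℝ), stdPhi z * h |z| := by
    rw [← hrefl]
    congr 1; funext z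
    rw [stdPhi_neg, abs_neg]
  have habs : ∫ z in Ioi (0:ℝ), stdPhi z * h |z| = ∫ s in Ioi (0:ℝ), h s * stdPhi s := by
    apply setIntegral_congr_fun measurableSet_Ioi
    intro z hz
    show stdPhi z * h |z| = h z * stdPhi z
    rw [abs_of_pos hz]; ring
  rw [step1, ← intervalIntegral.integral_Iic_add_Ioi hint.integrableOn hint.integrableOn, hIic, habs]
  ring

lemma integral_Ioi_g_zero {L : NNReal} {h : ℝ → ℝ} (hh : LipschitzWith L h) :
    ∫ s in Ioi (0:ℝ), (h s - Ehn h) * stdPhi s = 0 := by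
  have h1 : Integrable (fun s : ℝ => h s * stdPhi s) := integrable_lip_mul hh
  have h2 : Integrable (fun s : ℝ => Ehn h * stdPhi s) := integrable_stdPhi.const_mul _
  have : (fun s : ℝ => (h s - Ehn h) * stdPhi s)
      = fun s => h s * stdPhi s - Ehn h * stdPhi s := by funext s; ring
  rw [this, integral_sub h1.integrableOn h2.integrableOn, integral_const_mul,
    integral_Ioi_stdPhi_zero, Ehn_eq hh]
  ring

lemma core_bound {L : NNReal} {h : ℝ → ℝ} (hh : LipschitzWith L h) {x : ℝ} (hx : 0 < x) :
    |(1 + x^2) * fh h x + x * (h x - Ehn h)| ≤ (L : ℝ) := by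
  set c := Ehn h with hc
  set g : ℝ → ℝ := fun t => h t - c with hgdef
  have hgL : LipschitzWith L g := by
    apply LipschitzWith.of_dist_le_mul
    intro a b
    simp only [hgdef, Real.dist_eq, sub_sub_sub_cancel_right]
    exact (hh.dist_le_mul a b).trans (le_of_eq (by rw [Real.dist_eq]))
  have hgc : Continuous g := hgL.continuous
  have hφpos := stdPhi_pos x
  have hφ0 := (stdPhi_pos 0).le
  set P := ∫ t in (0:ℝ)..x, stdPhi t with hPdef
  set Q := ∫ s in Ioi x, stdPhi s with hQdef
  set I := ∫ t in (0:ℝ)..x, g t * stdPhi t with hIdef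
  set R := ∫ s in Ioi x, g s * stdPhi s with hRdef
  -- basic nonnegativity
  have hP : 0 ≤ P := intervalIntegral.integral_nonneg hx.le (fun t _ => (stdPhi_pos t).le)
  have hQ : 0 ≤ Q := setIntegral_nonneg measurableSet_Ioi (fun s _ => (stdPhi_pos s).le)
  -- P + Q = 1/2
  have hPQ : P + Q = 1/2 := by
    rw [hPdef, intervalIntegral.integral_of_le hx.le]
    rw [← integral_Ioi_stdPhi_zero, ← Ioc_union_Ioi_eq_Ioi hx.le,
      setIntegral_union (Ioc_disjoint_Ioi le_rfl) measurableSet_Ioi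
        integrable_stdPhi.integrableOn integrable_stdPhi.integrableOn]
  -- I + R = 0
  have hIR : I + R = 0 := by
    have h0 : ∫ s in Ioi (0:ℝ), g s * stdPhi s = 0 := integral_Ioi_g_zero hh
    have hsum : I + R = ∫ s in Ioi (0:ℝ), g s * stdPhi s := by
      rw [hIdef, hRdef, intervalIntegral.integral_of_le hx.le,
        ← setIntegral_union (Ioc_disjoint_Ioi le_rfl) measurableSet_Ioi
          (integrable_lip_mul hgL).integrableOn (integrable_lip_mul hgL).integrableOn,
        Ioc_union_Ioi_eq_Ioi hx.le]
    rw [hsum, h0]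
  -- the constants
  set C₁ := x * P - stdPhi 0 + stdPhi x with hC1def
  set C₂ := stdPhi x - x * Q with hC2def
  set K₁ := (1 + x^2) * Q - x * stdPhi x with hK1def
  set K₂ := (1 + x^2) * P + x * stdPhi x with hK2def
  set D₁ := g x * P - I with hD1def
  set D₂ := g x * Q + I with hD2def
  -- D₁ bound
  have hivφ : IntervalIntegrable stdPhi volume 0 x := continuous_stdPhi.intervalIntegrable 0 x
  have hct : Continuous fun t : ℝ => t * stdPhi t := continuous_id.mul continuous_stdPhi
  have htφ : ∫ t in (0:ℝ)..x, t * stdPhi t = stdPhi 0 - stdPhi x := by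
    have := intervalIntegral.integral_eq_sub_of_hasDerivAt
      (f := fun y => -stdPhi y) (f' := fun t => t * stdPhi t) (a := 0) (b := x)
      (fun t _ => ((hasDerivAt_stdPhi t).neg).congr_deriv (by ring))
      (hct.intervalIntegrable 0 x)
    rw [this]; ring
  have hC1eq : C₁ = ∫ t in (0:ℝ)..x, (x - t) * stdPhi t := by
    have : (fun t => (x - t) * stdPhi t) = fun t => x * stdPhi t - t * stdPhi t := by
      funext t; ring
    rw [this, intervalIntegral.integral_sub (hivφ.const_mul x)
      (hct.intervalIntegrable 0 x),
      intervalIntegral.integral_const_mul, htφ]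
    ring
  have hD1 : |D₁| ≤ L * C₁ := by
    have heq : D₁ = ∫ t in (0:ℝ)..x, (g x - g t) * stdPhi t := by
      have : (fun t => (g x - g t) * stdPhi t)
          = fun t => g x * stdPhi t - g t * stdPhi t := by funext t; ring
      rw [this, intervalIntegral.integral_sub (hivφ.const_mul (g x))
        (show IntervalIntegrable (fun t => g t * stdPhi t) volume 0 x from (hgc.mul continuous_stdPhi).intervalIntegrable 0 x),
        intervalIntegral.integral_const_mul]
    have hb : ∀ᵐ t ∂(volume.restrict (Set.uIoc (0:ℝ) x)), ‖(g x - g t) * stdPhi t‖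
        ≤ (L : ℝ) * ((x - t) * stdPhi t) := by
      rw [uIoc_of_le hx.le]
      filter_upwards [ae_restrict_mem measurableSet_Ioc] with t ht
      rw [Real.norm_eq_abs, abs_mul, abs_of_pos (stdPhi_pos t)]
      have h1 : |g x - g t| ≤ (L : ℝ) * (x - t) := by
        have := hgL.dist_le_mul x t
        rw [Real.dist_eq, Real.dist_eq, abs_of_nonneg (by linarith [ht.2] : (0:ℝ) ≤ x - t)] at this
        exact this
      calc |g x - g t| * stdPhi t ≤ (L:ℝ) * (x - t) * stdPhi t :=
            mul_le_mul_of_nonneg_right h1 (stdPhi_pos t).le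
        _ = (L:ℝ) * ((x - t) * stdPhi t) := by ring
    have := intervalIntegral.norm_integral_le_abs_of_norm_le hb
      (((continuous_const.mul ((continuous_const.sub continuous_id).mul continuous_stdPhi))).intervalIntegrable 0 x)
    rw [← heq] at this
    rw [intervalIntegral.integral_const_mul, ← hC1eq] at this
    have hC1n : 0 ≤ C₁ := by
      rw [hC1eq]
      exact intervalIntegral.integral_nonneg hx.le
        (fun t ht => mul_nonneg (by linarith [ht.2]) (stdPhi_pos t).le)
    calc |D₁| = ‖D₁‖ := (Real.norm_eq_abs _).symm
      _ ≤ |(L:ℝ) * C₁| := this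
      _ = (L:ℝ) * C₁ := abs_of_nonneg (mul_nonneg L.coe_nonneg hC1n)
  -- C₂ and D₂ bound
  have hC2eq : C₂ = ∫ s in Ioi x, (s - x) * stdPhi s := by
    have hfun : (fun s : ℝ => (s - x) * stdPhi s) = fun s => s * stdPhi s - x * stdPhi s := by
      funext s; ring
    rw [hfun, integral_sub integrable_mul_stdPhi.integrableOn
      (integrable_stdPhi.const_mul x).integrableOn, integral_const_mul,
      integral_Ioi_mul_stdPhi, ← hQdef]
  have hC2n : 0 ≤ C₂ := by
    rw [hC2eq]
    apply setIntegral_nonneg measurableSet_Ioi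
    intro s hs; exact mul_nonneg (by linarith [mem_Ioi.mp hs]) (stdPhi_pos s).le
  have hD2 : |D₂| ≤ (L:ℝ) * C₂ := by
    have heq : D₂ = ∫ s in Ioi x, (g x - g s) * stdPhi s := by
      have hfun : (fun s : ℝ => (g x - g s) * stdPhi s)
          = fun s => g x * stdPhi s - g s * stdPhi s := by funext s; ring
      rw [hfun, integral_sub (integrable_stdPhi.const_mul (g x)).integrableOn
        (integrable_lip_mul hgL).integrableOn, integral_const_mul, ← hQdef, ← hRdef, hD2def]
      linarith [hIR]
    have hb : ∀ᵐ s ∂(volume.restrict (Ioi x)), ‖(g x - g s) * stdPhi s‖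
        ≤ (L:ℝ) * ((s - x) * stdPhi s) := by
      filter_upwards [ae_restrict_mem measurableSet_Ioi] with s hs
      rw [Real.norm_eq_abs, abs_mul, abs_of_pos (stdPhi_pos s)]
      have h1 : |g x - g s| ≤ (L:ℝ) * (s - x) := by
        have h2 := hgL.dist_le_mul x s
        rw [Real.dist_eq, Real.dist_eq, abs_sub_comm x s,
          abs_of_nonneg (by linarith [mem_Ioi.mp hs] : (0:ℝ) ≤ s - x)] at h2
        exact h2
      calc |g x - g s| * stdPhi s ≤ (L:ℝ) * (s - x) * stdPhi s :=
            mul_le_mul_of_nonneg_right h1 (stdPhi_pos s).le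
        _ = (L:ℝ) * ((s - x) * stdPhi s) := by ring
    have hbint : Integrable (fun s => (L:ℝ) * ((s - x) * stdPhi s))
        (volume.restrict (Ioi x)) := by
      apply Integrable.const_mul
      have hfun2 : (fun s : ℝ => (s - x) * stdPhi s)
          = fun s => s * stdPhi s - x * stdPhi s := by funext s; ring
      rw [hfun2]
      exact (integrable_mul_stdPhi.sub (integrable_stdPhi.const_mul x)).integrableOn
    have hnorm := norm_integral_le_of_norm_le hbint hb
    rw [← heq, integral_const_mul, ← hC2eq] at hnorm
    exact (Real.norm_eq_abs D₂) ▸ hnorm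
  -- K₁ nonneg
  have hK1eq : K₁ = ∫ s in Ioi x, (s - x)^2 * stdPhi s := by
    have hfun : (fun s : ℝ => (s - x)^2 * stdPhi s)
        = fun s => s^2 * stdPhi s - (2*x) * (s * stdPhi s) + x^2 * stdPhi s := by
      funext s; ring
    have i1 : IntegrableOn (fun s : ℝ => s^2 * stdPhi s) (Ioi x) :=
      integrable_sq_mul_stdPhi.integrableOn
    have i2 : IntegrableOn (fun s : ℝ => (2*x) * (s * stdPhi s)) (Ioi x) :=
      (integrable_mul_stdPhi.const_mul _).integrableOn
    have i3 : IntegrableOn (fun s : ℝ => x^2 * stdPhi s) (Ioi x) :=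
      (integrable_stdPhi.const_mul _).integrableOn
    have i12 : IntegrableOn (fun s : ℝ => s^2 * stdPhi s - (2*x) * (s * stdPhi s)) (Ioi x) :=
      i1.sub i2
    rw [hfun, integral_add i12 i3, integral_sub i1 i2, integral_const_mul,
      integral_const_mul, integral_Ioi_sq_mul_stdPhi, integral_Ioi_mul_stdPhi, ← hQdef, hK1def]
    ring
  have hK1n : 0 ≤ K₁ := by
    rw [hK1eq]
    apply setIntegral_nonneg measurableSet_Ioi
    intro s _; exact mul_nonneg (sq_nonneg _) (stdPhi_pos s).le
  have hK2n : 0 ≤ K₂ := by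
    rw [hK2def]; nlinarith [hφpos, hP, hx]
  have hfhx : fh h x = (stdPhi x)⁻¹ * I := rfl
  clear_value P Q I R C₁ C₂ K₁ K₂ D₁ D₂
  -- key inequality
  have hkey : C₁ * K₁ + C₂ * K₂ ≤ stdPhi x / 2 := by
    have hid : C₁ * K₁ + C₂ * K₂ = stdPhi x / 2 - stdPhi 0 * K₁ := by
      rw [hC1def, hC2def, hK1def, hK2def]
      linear_combination (stdPhi x) * hPQ
    nlinarith [mul_nonneg hφ0 hK1n]
  -- main algebraic identity
  have hkey2 : (1+x^2)*I + x * g x * stdPhi x = 2*D₂*K₂ - 2*D₁*K₁ := by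
    rw [hD1def, hD2def, hK1def, hK2def]
    linear_combination (-2*(g x * x * stdPhi x + (1+x^2)*I)) * hPQ
  have hM : |(1+x^2)*I + x * g x * stdPhi x| ≤ (L:ℝ) * stdPhi x := by
    rw [hkey2]
    have e1 : |2*D₂*K₂ - 2*D₁*K₁| ≤ 2*|D₂| *K₂ + 2*|D₁| *K₁ := by
      calc |2*D₂*K₂ - 2*D₁*K₁| ≤ |2*D₂*K₂| + |2*D₁*K₁| := abs_sub _ _
        _ = 2*|D₂| *K₂ + 2*|D₁| *K₁ := by
          rw [abs_mul, abs_mul, abs_mul, abs_mul]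
          rw [abs_of_nonneg hK2n, abs_of_nonneg hK1n]
          norm_num
    have e2 : |D₂| * K₂ ≤ ((L:ℝ)*C₂)*K₂ := mul_le_mul_of_nonneg_right hD2 hK2n
    have e3 : |D₁| * K₁ ≤ ((L:ℝ)*C₁)*K₁ := mul_le_mul_of_nonneg_right hD1 hK1n
    have e4 : 2*(L:ℝ)*(C₁*K₁ + C₂*K₂) ≤ 2*(L:ℝ)*(stdPhi x / 2) :=
      mul_le_mul_of_nonneg_left hkey (by positivity)
    calc |2*D₂*K₂ - 2*D₁*K₁| ≤ 2*|D₂| * K₂ + 2*|D₁| * K₁ := e1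
      _ ≤ 2*(((L:ℝ)*C₂)*K₂) + 2*(((L:ℝ)*C₁)*K₁) := by linarith
      _ = 2*(L:ℝ)*(C₁*K₁ + C₂*K₂) := by ring
      _ ≤ 2*(L:ℝ)*(stdPhi x / 2) := e4
      _ = (L:ℝ) * stdPhi x := by ring
  -- finish
  have hprod : ((1+x^2) * fh h x + x * g x) * stdPhi x = (1+x^2)*I + x * g x * stdPhi x := by
    rw [hfhx]
    field_simp
  have habs2 : |(1+x^2) * fh h x + x * g x| * stdPhi x ≤ (L:ℝ) * stdPhi x := by
    calc |(1+x^2) * fh h x + x * g x| * stdPhi x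
        = |((1+x^2) * fh h x + x * g x) * stdPhi x| := by
          rw [abs_mul, abs_of_pos hφpos]
      _ = |(1+x^2)*I + x * g x * stdPhi x| := by rw [hprod]
      _ ≤ (L:ℝ) * stdPhi x := hM
  have final : |(1+x^2) * fh h x + x * g x| ≤ (L:ℝ) :=
    le_of_mul_le_mul_right habs2 hφpos
  simpa [hgdef] using final

lemma hasDerivAt_fh {L : NNReal} {h : ℝ → ℝ} (hh : LipschitzWith L h) (y : ℝ) :
    HasDerivAt (fh h) (y * fh h y + (h y - Ehn h)) y := by
  have hgc : Continuous fun t => (h t - Ehn h) * stdPhi t :=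
    (hh.continuous.sub continuous_const).mul continuous_stdPhi
  have hI : HasDerivAt (fun u => ∫ t in (0:ℝ)..u, (h t - Ehn h) * stdPhi t)
      ((h y - Ehn h) * stdPhi y) y :=
    intervalIntegral.integral_hasDerivAt_right (hgc.intervalIntegrable _ _)
      (hgc.stronglyMeasurableAtFilter _ _) hgc.continuousAt
  have hφy := stdPhi_pos y
  have hinv : HasDerivAt (fun u => (stdPhi u)⁻¹) (y * (stdPhi y)⁻¹) y := by
    have H := (hasDerivAt_stdPhi y).inv (ne_of_gt hφy)
    apply H.congr_deriv
    field_simp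
  have hmul := hinv.mul hI
  rw [show fh h = fun u => (stdPhi u)⁻¹ * ∫ t in (0:ℝ)..u, (h t - Ehn h) * stdPhi t from rfl]
  apply hmul.congr_deriv
  show y * (stdPhi y)⁻¹ * (∫ t in (0:ℝ)..y, (h t - Ehn h) * stdPhi t)
      + (stdPhi y)⁻¹ * ((h y - Ehn h) * stdPhi y)
    = y * ((stdPhi y)⁻¹ * ∫ t in (0:ℝ)..y, (h t - Ehn h) * stdPhi t) + (h y - Ehn h)
  field_simp

lemma deriv_bound {h : ℝ → ℝ} {L : NNReal} (hd : DifferentiableAt ℝ h x)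
    (hh : LipschitzWith L h) : |deriv h x| ≤ (L : ℝ) := by
  have h1 : ‖fderiv ℝ h x‖ ≤ (L : ℝ) := norm_fderiv_le_of_lipschitz ℝ hh
  have h2 : deriv h x = fderiv ℝ h x 1 := (fderiv_apply_one_eq_deriv).symm
  rw [← Real.norm_eq_abs, h2]
  calc ‖fderiv ℝ h x 1‖ ≤ ‖fderiv ℝ h x‖ * ‖(1:ℝ)‖ := (fderiv ℝ h x).le_opNorm 1
    _ ≤ (L : ℝ) := by simpa using h1

end SteinAux

open SteinAux

theorem stmt10 (h : ℝ → ℝ) (L : NNReal) (hh : LipschitzOnWith L h (Set.Ici 0)) :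
    ∀ᵐ x ∂(volume.restrict (Set.Ici (0:ℝ))),
      ∃ d : ℝ, HasDerivAt (deriv (fh h)) d x ∧ |d| ≤ 2 * (L : ℝ) := by
  obtain ⟨h₂, hh₂, heq⟩ := hh.extend_real
  have hEhn : Ehn h = Ehn h₂ := by
    unfold Ehn; congr 1; funext z; exact heq (abs_nonneg z)
  have hfh : ∀ y : ℝ, 0 ≤ y → fh h y = fh h₂ y := by
    intro y hy
    unfold fh
    rw [hEhn]
    congr 1
    apply intervalIntegral.integral_congr
    intro t ht
    rw [Set.uIcc_of_le hy] at ht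
    show (h t - Ehn h₂) * stdPhi t = (h₂ t - Ehn h₂) * stdPhi t
    rw [heq ht.1]
  have hdiff : ∀ᵐ x ∂(volume.restrict (Set.Ici (0:ℝ))), DifferentiableAt ℝ h₂ x :=
    ae_restrict_of_ae (hh₂.ae_differentiableAt (μ := volume))
  have hpos : ∀ᵐ x ∂(volume.restrict (Set.Ici (0:ℝ))), 0 < x := by
    have h1 : ∀ᵐ x ∂(volume.restrict (Set.Ici (0:ℝ))), x ∈ Set.Ici (0:ℝ) :=
      ae_restrict_mem measurableSet_Ici
    have h2 : ∀ᵐ x ∂(volume.restrict (Set.Ici (0:ℝ))), x ≠ 0 := by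
      apply ae_restrict_of_ae
      rw [ae_iff]
      have hset : {x : ℝ | ¬ x ≠ 0} = {0} := by ext t; simp
      rw [hset]
      exact measure_singleton 0
    filter_upwards [h1, h2] with x hx hne
    exact lt_of_le_of_ne hx (Ne.symm hne)
  filter_upwards [hdiff, hpos] with x hdx hx
  refine ⟨(1 + x^2) * fh h₂ x + x * (h₂ x - Ehn h₂) + deriv h₂ x, ?_, ?_⟩
  · have hF : HasDerivAt (fun y => y * fh h₂ y + (h₂ y - Ehn h₂))
        ((1 + x^2) * fh h₂ x + x * (h₂ x - Ehn h₂) + deriv h₂ x) x := by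
      have h1 := (hasDerivAt_id x).mul (hasDerivAt_fh hh₂ x)
      have h2 := (hdx.hasDerivAt).sub_const (Ehn h₂)
      have h3 := h1.add h2
      apply h3.congr_deriv
      simp only [id_eq, one_mul]
      ring
    apply hF.congr_of_eventuallyEq
    have hnb : Set.Ioi (0:ℝ) ∈ 𝓝 x := Ioi_mem_nhds hx
    filter_upwards [hnb] with y hy
    have hloc : fh h =ᶠ[𝓝 y] fh h₂ := by
      filter_upwards [Ioi_mem_nhds hy] with z hz
      exact hfh z (le_of_lt hz)
    rw [hloc.deriv_eq, (hasDerivAt_fh hh₂ y).deriv]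
  · have hb1 := core_bound hh₂ hx
    have hb2 := deriv_bound hdx hh₂
    calc |(1 + x^2) * fh h₂ x + x * (h₂ x - Ehn h₂) + deriv h₂ x|
        ≤ |(1 + x^2) * fh h₂ x + x * (h₂ x - Ehn h₂)| + |deriv h₂ x| := abs_add_le _ _
      _ ≤ (L:ℝ) + (L:ℝ) := add_le_add hb1 hb2
      _ = 2 * (L:ℝ) := by ring
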